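/- Let K be a Markov transition kernel on a compact Riemannian manifold M admitting a density k(x,y) with λ ≤ k ≤ Λ for some 0 < λ ≤ Λ. Then K admits an invariant probability measure μ_∞ = ρ dm that is absolutely continuous with respect to the volume measure with density satisfying λ ≤ ρ ≤ Λ. -/

import Mathlib

open MeasureTheory Filter

private lemma bdd_int {α : Type*} [MeasurableSpace α] (μ : Measure α) [IsFiniteMeasure μ]
    {g : α → ℝ} (C : ℝ) (hg : AEStronglyMeasurable g μ) (hC : ∀ z, |g z| ≤ C) :
    Integrable g μ :=
  (integrable_const C).mono' hg (Filter.Eventually.of_forall fun z => by simpa using hC z)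

/-- Existence of an absolutely continuous invariant measure for a Markov kernel with
two-sided bounded density: if `K(x,A) = ∫_A k(x,y) dm(y)` with `0 < λ ≤ k ≤ Λ`, then
there is an invariant probability measure `μ_∞ = ρ dm` with `λ ≤ ρ ≤ Λ`. -/
theorem stmt12 {M : Type*} [MeasurableSpace M] (m : Measure M) [IsProbabilityMeasure m]
    (k : M → M → ℝ) (lam Lam : ℝ) (hlam : 0 < lam) (hlamLam : lam ≤ Lam)
    (hk : Measurable (Function.uncurry k))
    (hbound : ∀ x y, lam ≤ k x y ∧ k x y ≤ Lam)
    (hmass : ∀ x, ∫ y, k x y ∂m = 1) :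
    ∃ ρ : M → ℝ, Measurable ρ ∧ (∀ x, lam ≤ ρ x ∧ ρ x ≤ Lam) ∧ (∫ x, ρ x ∂m = 1) ∧
      ∀ A : Set M, MeasurableSet A →
        ∫ x, ρ x * ∫ y in A, k x y ∂m ∂m = ∫ y in A, ρ y ∂m := by
  classical
  have hΛ0 : 0 < Lam := lt_of_lt_of_le hlam hlamLam
  have hky : ∀ y, Measurable fun x => k x y := fun y =>
    hk.comp (measurable_id.prodMk measurable_const)
  have habsk : ∀ x y, |k x y| ≤ Lam := fun x y =>
    abs_le.mpr ⟨by linarith [(hbound x y).1], (hbound x y).2⟩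
  have hkint : ∀ x, Integrable (fun y => k x y) m := fun x =>
    bdd_int m Lam (hk.of_uncurry_left).aestronglyMeasurable (habsk x)
  -- M is nonempty
  have hMne : Nonempty M := by
    by_contra h
    rw [not_nonempty_iff] at h
    have h1 : m Set.univ = 1 := measure_univ
    rw [Set.univ_eq_empty_iff.mpr h] at h1
    simp at h1
  obtain ⟨x0⟩ := hMne
  have hlam1 : lam ≤ 1 := by
    have h := integral_mono (integrable_const lam) (hkint x0) fun y => (hbound x0 y).1
    simpa [hmass x0] using h
  have hΛ1 : 1 ≤ Lam := by
    have h := integral_mono (hkint x0) (integrable_const Lam) fun y => (hbound x0 y).2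
    simpa [hmass x0] using h
  set r : ℝ := 1 - lam with hr
  have hr0 : 0 ≤ r := by simp only [hr]; linarith
  have hr1 : r < 1 := by simp only [hr]; linarith
  -- the transfer operator
  set T : (M → ℝ) → M → ℝ := fun f y => ∫ x, f x * k x y ∂m with hT
  have habsle : ∀ (h : M → ℝ), |∫ x, h x ∂m| ≤ ∫ x, |h x| ∂m := fun h => by
    simpa [Real.norm_eq_abs] using norm_integral_le_integral_norm (μ := m) h
  -- integrability of sections
  have hint_sec : ∀ {g : M → ℝ} (C : ℝ), Measurable g → (∀ x, |g x| ≤ C) → ∀ y,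
      Integrable (fun x => g x * k x y) m := by
    intro g C hg hC y
    refine bdd_int m (C * Lam) ((hg.mul (hky y)).aestronglyMeasurable) fun x => ?_
    rw [abs_mul]
    exact mul_le_mul (hC x) (habsk x y) (abs_nonneg _) (le_trans (abs_nonneg _) (hC x))
  -- measurability of T g
  have hTmeas : ∀ {g : M → ℝ}, Measurable g → Measurable (T g) := by
    intro g hg
    have h : StronglyMeasurable (Function.uncurry fun x y => g x * k x y) :=
      ((hg.comp measurable_fst).mul hk).stronglyMeasurable
    exact h.integral_prod_left.measurable
  -- mass preservation
  have hTmass : ∀ {g : M → ℝ} (C : ℝ), Measurable g → (∀ x, |g x| ≤ C) →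
      ∫ y, T g y ∂m = ∫ x, g x ∂m := by
    intro g C hg hC
    have hip : Integrable (Function.uncurry fun x y => g x * k x y) (m.prod m) := by
      refine bdd_int _ (C * Lam) ((hg.comp measurable_fst).mul hk).aestronglyMeasurable fun p => ?_
      rw [Function.uncurry]
      rw [abs_mul]
      exact mul_le_mul (hC p.1) (habsk p.1 p.2) (abs_nonneg _) (le_trans (abs_nonneg _) (hC p.1))
    have hswap := integral_integral_swap (f := fun x y => g x * k x y) hip
    have : ∀ x, ∫ y, g x * k x y ∂m = g x := by
      intro x
      rw [integral_const_mul, hmass x, mul_one]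
    calc ∫ y, T g y ∂m = ∫ y, ∫ x, g x * k x y ∂m ∂m := rfl
      _ = ∫ x, ∫ y, g x * k x y ∂m ∂m := hswap.symm
      _ = ∫ x, g x ∂m := integral_congr_ae (Filter.Eventually.of_forall this)
  -- bounds of T g
  have hTbd : ∀ {g : M → ℝ}, Measurable g → (∀ x, lam ≤ g x ∧ g x ≤ Lam) → (∫ x, g x ∂m = 1) →
      ∀ y, lam ≤ T g y ∧ T g y ≤ Lam := by
    intro g hg hgb hg1 y
    have habs : ∀ x, |g x| ≤ Lam := fun x => abs_le.mpr ⟨by linarith [(hgb x).1], (hgb x).2⟩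
    have hint := hint_sec Lam hg habs y
    have hgint : Integrable g m := bdd_int m Lam hg.aestronglyMeasurable habs
    constructor
    · have h1 : ∫ x, lam * g x ∂m ≤ ∫ x, g x * k x y ∂m := by
        refine integral_mono (hgint.const_mul lam) hint fun x => ?_
        have h2 := (hbound x y).1
        have h3 := (hgb x).1
        nlinarith
      rwa [integral_const_mul, hg1, mul_one] at h1
    · have h1 : ∫ x, g x * k x y ∂m ≤ ∫ x, Lam * g x ∂m := by
        refine integral_mono hint (hgint.const_mul Lam) fun x => ?_
        have h2 := (hbound x y).2
        have h3 := (hgb x).1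
        nlinarith
      rwa [integral_const_mul, hg1, mul_one] at h1
  -- the iteration
  set f : ℕ → M → ℝ := fun n => T^[n] (fun _ => 1) with hfdef
  have hf0 : f 0 = fun _ => 1 := rfl
  have hsucc : ∀ n, f (n + 1) = T (f n) := fun n => Function.iterate_succ_apply' T n _
  have hP : ∀ n, Measurable (f n) ∧ (∀ x, lam ≤ f n x ∧ f n x ≤ Lam) ∧ ∫ x, f n x ∂m = 1 := by
    intro n
    induction n with
    | zero =>
      refine ⟨by rw [hf0]; exact measurable_const, fun x => ⟨hlam1, hΛ1⟩, by simp [hf0]⟩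
    | succ n ih =>
      obtain ⟨hm, hb, h1⟩ := ih
      have habs : ∀ x, |f n x| ≤ Lam := fun x => abs_le.mpr ⟨by linarith [(hb x).1], (hb x).2⟩
      rw [hsucc n]
      exact ⟨hTmeas hm, hTbd hm hb h1, by rw [hTmass Lam hm habs, h1]⟩
  have habsf : ∀ n x, |f n x| ≤ Lam := fun n x =>
    abs_le.mpr ⟨by linarith [((hP n).2.1 x).1], ((hP n).2.1 x).2⟩
  -- the key contraction estimates
  have keyL1 : ∀ {g : M → ℝ} (C : ℝ), Measurable g → (∀ x, |g x| ≤ C) → (∫ x, g x ∂m = 0) →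
      (∀ y, |T g y| ≤ Lam * ∫ x, |g x| ∂m) ∧ (∫ y, |T g y| ∂m ≤ r * ∫ x, |g x| ∂m) := by
    intro g C hg hgC hg0
    have hC0 : 0 ≤ C := le_trans (abs_nonneg _) (hgC x0)
    have hgint : Integrable g m := bdd_int m C hg.aestronglyMeasurable hgC
    have habsint : Integrable (fun x => |g x|) m := hgint.abs
    have hsec2 : ∀ y, Integrable (fun x => g x * (k x y - lam)) m := by
      intro y
      refine bdd_int m (C * Lam) ((hg.mul ((hky y).sub measurable_const)).aestronglyMeasurable)
        fun x => ?_
      rw [abs_mul]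
      refine mul_le_mul (hgC x) ?_ (abs_nonneg _) hC0
      rw [abs_of_nonneg (by linarith [(hbound x y).1])]
      linarith [(hbound x y).2, hlam.le]
    have hptA : ∀ y, T g y = ∫ x, g x * (k x y - lam) ∂m := by
      intro y
      have h2 : Integrable (fun x => g x * lam) m := hgint.mul_const lam
      have he : T g y = ∫ x, (g x * (k x y - lam) + g x * lam) ∂m := by
        simp only [hT]
        congr 1
        funext x
        ring
      rw [he, integral_add (hsec2 y) h2, integral_mul_const, hg0, zero_mul, add_zero]
    have hpt : ∀ y, |T g y| ≤ ∫ x, |g x| * (k x y - lam) ∂m := by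
      intro y
      rw [hptA y]
      calc |∫ x, g x * (k x y - lam) ∂m| ≤ ∫ x, |g x * (k x y - lam)| ∂m :=
            habsle _
        _ = ∫ x, |g x| * (k x y - lam) ∂m := by
            refine integral_congr_ae (Filter.Eventually.of_forall fun x => ?_)
            show |g x * (k x y - lam)| = |g x| * (k x y - lam)
            rw [abs_mul, abs_of_nonneg (show (0:ℝ) ≤ k x y - lam by linarith [(hbound x y).1])]
    have hsec3 : ∀ y, Integrable (fun x => |g x| * (k x y - lam)) m := by
      intro y
      refine bdd_int m (C * Lam) ((hg.abs.mul ((hky y).sub measurable_const)).aestronglyMeasurable)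
        fun x => ?_
      rw [abs_mul]
      refine mul_le_mul (by rw [abs_abs]; exact hgC x) ?_ (abs_nonneg _) hC0
      rw [abs_of_nonneg (by linarith [(hbound x y).1])]
      linarith [(hbound x y).2, hlam.le]
    constructor
    · intro y
      refine le_trans (hpt y) ?_
      have h1 : ∫ x, |g x| * (k x y - lam) ∂m ≤ ∫ x, |g x| * Lam ∂m := by
        refine integral_mono (hsec3 y) (habsint.mul_const Lam) fun x => ?_
        have := (hbound x y).2
        have := abs_nonneg (g x)
        nlinarith [hlam.le]
      rw [integral_mul_const] at h1
      linarith [h1, mul_comm (∫ x, |g x| ∂m) Lam]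
    · -- L¹ contraction
      have hΦmeas : Measurable fun y => ∫ x, |g x| * (k x y - lam) ∂m := by
        have h : StronglyMeasurable (Function.uncurry fun x y => |g x| * (k x y - lam)) :=
          ((hg.abs.comp measurable_fst).mul (hk.sub measurable_const)).stronglyMeasurable
        exact h.integral_prod_left.measurable
      have hΦle : ∀ y, ∫ x, |g x| * (k x y - lam) ∂m ≤ C * Lam := by
        intro y
        calc ∫ x, |g x| * (k x y - lam) ∂m ≤ ∫ x, (C * Lam : ℝ) ∂m := by
              refine integral_mono (hsec3 y) (integrable_const _) fun x => ?_
              have h1 := (hbound x y).1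
              have h2 := (hbound x y).2
              have h3 := abs_nonneg (g x)
              nlinarith [hgC x, hlam.le]
          _ = C * Lam := by simp
      have hΦnn : ∀ y, 0 ≤ ∫ x, |g x| * (k x y - lam) ∂m := fun y =>
        integral_nonneg fun x => mul_nonneg (abs_nonneg _) (by linarith [(hbound x y).1])
      have hΦbd : ∀ y, |∫ x, |g x| * (k x y - lam) ∂m| ≤ C * Lam := fun y => by
        rw [abs_of_nonneg (hΦnn y)]; exact hΦle y
      have hTgbd : ∀ y, |T g y| ≤ C * Lam := fun y => le_trans (hpt y) (hΦle y)
      have h1 : ∫ y, |T g y| ∂m ≤ ∫ y, ∫ x, |g x| * (k x y - lam) ∂m ∂m := by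
        refine integral_mono (bdd_int m (C * Lam) ((hTmeas hg).abs.aestronglyMeasurable)
          fun y => by rw [abs_abs]; exact hTgbd y) (bdd_int m (C * Lam)
          hΦmeas.aestronglyMeasurable hΦbd) hpt
      have hip : Integrable (Function.uncurry fun x y => |g x| * (k x y - lam)) (m.prod m) := by
        refine bdd_int _ (C * Lam)
          ((hg.abs.comp measurable_fst).mul (hk.sub measurable_const)).aestronglyMeasurable
          fun p => ?_
        rw [Function.uncurry, abs_mul, abs_abs]
        refine mul_le_mul (hgC p.1) ?_ (abs_nonneg _) hC0
        rw [abs_of_nonneg (by linarith [(hbound p.1 p.2).1])]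
        linarith [(hbound p.1 p.2).2, hlam.le]
      have hswap := integral_integral_swap (f := fun x y => |g x| * (k x y - lam)) hip
      have h2 : ∫ x, ∫ y, |g x| * (k x y - lam) ∂m ∂m = r * ∫ x, |g x| ∂m := by
        have : ∀ x, ∫ y, |g x| * (k x y - lam) ∂m = |g x| * r := by
          intro x
          rw [integral_const_mul, integral_sub (hkint x) (integrable_const lam), hmass x]
          simp [hr]
        rw [integral_congr_ae (Filter.Eventually.of_forall this), integral_mul_const, mul_comm]
      linarith [h1, hswap, h2]
  -- the L¹ distance sequence
  have hDmeas : ∀ n, Measurable fun x => f (n + 1) x - f n x := fun n =>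
    (hP (n + 1)).1.sub (hP n).1
  have hDbd : ∀ n x, |f (n + 1) x - f n x| ≤ Lam - lam := by
    intro n x
    have h1 := ((hP (n + 1)).2.1 x).1
    have h2 := ((hP (n + 1)).2.1 x).2
    have h3 := ((hP n).2.1 x).1
    have h4 := ((hP n).2.1 x).2
    rw [abs_le]
    constructor <;> linarith
  have hD0int : ∀ n, ∫ x, (f (n + 1) x - f n x) ∂m = 0 := by
    intro n
    have hi1 : Integrable (f (n + 1)) m :=
      bdd_int m Lam (hP (n + 1)).1.aestronglyMeasurable (habsf (n + 1))
    have hi2 : Integrable (f n) m := bdd_int m Lam (hP n).1.aestronglyMeasurable (habsf n)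
    rw [integral_sub hi1 hi2, (hP (n + 1)).2.2, (hP n).2.2, sub_self]
  have hTsub : ∀ n y, T (fun x => f (n + 1) x - f n x) y = f (n + 2) y - f (n + 1) y := by
    intro n y
    have h1 : T (fun x => f (n + 1) x - f n x) y = T (f (n + 1)) y - T (f n) y := by
      simp only [hT, sub_mul]
      exact integral_sub (hint_sec Lam (hP (n + 1)).1 (habsf (n + 1)) y)
        (hint_sec Lam (hP n).1 (habsf n) y)
    rw [h1, ← hsucc (n + 1), ← hsucc n]
  -- geometric decay of the L¹ distance
  have hD : ∀ n, ∫ x, |f (n + 1) x - f n x| ∂m ≤ (Lam - lam) * r ^ n := by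
    intro n
    induction n with
    | zero =>
      have h := integral_mono (bdd_int m (Lam - lam) ((hDmeas 0).abs.aestronglyMeasurable)
        (fun x => by rw [abs_abs]; exact hDbd 0 x)) (integrable_const (Lam - lam))
        (fun x => hDbd 0 x)
      simpa using h
    | succ n ih =>
      have hkey := (keyL1 (Lam - lam) (hDmeas n) (hDbd n) (hD0int n)).2
      have heq : ∀ y, |f (n + 2) y - f (n + 1) y| = |T (fun x => f (n + 1) x - f n x) y| := by
        intro y
        rw [hTsub n y]
      calc ∫ x, |f (n + 1 + 1) x - f (n + 1) x| ∂m
          = ∫ y, |T (fun x => f (n + 1) x - f n x) y| ∂m :=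
            integral_congr_ae (Filter.Eventually.of_forall fun y => heq y)
        _ ≤ r * ∫ x, |f (n + 1) x - f n x| ∂m := hkey
        _ ≤ r * ((Lam - lam) * r ^ n) := by
            exact mul_le_mul_of_nonneg_left ih hr0
        _ = (Lam - lam) * r ^ (n + 1) := by ring
  -- geometric pointwise Cauchy estimate
  have hCauchyEst : ∀ n y, |f (n + 2) y - f (n + 1) y| ≤ Lam * (Lam - lam) * r ^ n := by
    intro n y
    have hkey := (keyL1 (Lam - lam) (hDmeas n) (hDbd n) (hD0int n)).1 y
    rw [hTsub n y] at hkey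
    calc |f (n + 2) y - f (n + 1) y| ≤ Lam * ∫ x, |f (n + 1) x - f n x| ∂m := hkey
      _ ≤ Lam * ((Lam - lam) * r ^ n) := mul_le_mul_of_nonneg_left (hD n) hΛ0.le
      _ = Lam * (Lam - lam) * r ^ n := by ring
  -- existence of pointwise limits
  have hconv : ∀ y, ∃ l, Tendsto (fun n => f (n + 1) y) atTop (nhds l) := by
    intro y
    refine cauchySeq_tendsto_of_complete
      (cauchySeq_of_le_geometric r (Lam * (Lam - lam)) hr1 fun n => ?_)
    rw [Real.dist_eq, abs_sub_comm]
    exact hCauchyEst n y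
  choose ρ hρ using hconv
  have hρmeas : Measurable ρ :=
    measurable_of_tendsto_metrizable (fun n => (hP (n + 1)).1) (tendsto_pi_nhds.mpr hρ)
  have hρbd : ∀ x, lam ≤ ρ x ∧ ρ x ≤ Lam := by
    intro x
    constructor
    · exact ge_of_tendsto' (hρ x) fun n => ((hP (n + 1)).2.1 x).1
    · exact le_of_tendsto' (hρ x) fun n => ((hP (n + 1)).2.1 x).2
  have habsρ : ∀ x, |ρ x| ≤ Lam := fun x =>
    abs_le.mpr ⟨by linarith [(hρbd x).1], (hρbd x).2⟩
  have hρ1 : ∫ x, ρ x ∂m = 1 := by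
    have htends : Tendsto (fun n => ∫ x, f (n + 1) x ∂m) atTop (nhds (∫ x, ρ x ∂m)) := by
      refine tendsto_integral_of_dominated_convergence (fun _ => Lam)
        (fun n => (hP (n + 1)).1.aestronglyMeasurable) (integrable_const Lam)
        (fun n => Filter.Eventually.of_forall fun x => ?_)
        (Filter.Eventually.of_forall hρ)
      rw [Real.norm_eq_abs]
      exact habsf (n + 1) x
    have hconst : (fun n => ∫ x, f (n + 1) x ∂m) = fun _ => (1 : ℝ) :=
      funext fun n => (hP (n + 1)).2.2
    rw [hconst] at htends
    exact (tendsto_nhds_unique tendsto_const_nhds htends).symm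
  -- the fixed point property
  have hfix : ∀ y, T ρ y = ρ y := by
    intro y
    have h1 : Tendsto (fun n => ∫ x, f (n + 1) x * k x y ∂m) atTop
        (nhds (∫ x, ρ x * k x y ∂m)) := by
      refine tendsto_integral_of_dominated_convergence (fun _ => Lam * Lam)
        (fun n => (hint_sec Lam (hP (n + 1)).1 (habsf (n + 1)) y).aestronglyMeasurable)
        (integrable_const _)
        (fun n => Filter.Eventually.of_forall fun x => ?_)
        (Filter.Eventually.of_forall fun x => (hρ x).mul_const (k x y))
      rw [Real.norm_eq_abs, abs_mul]
      exact mul_le_mul (habsf (n + 1) x) (habsk x y) (abs_nonneg _) hΛ0.le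
    have h2 : (fun n => ∫ x, f (n + 1) x * k x y ∂m) = fun n => f (n + 2) y := by
      funext n
      rw [show f (n + 2) = T (f (n + 1)) from hsucc (n + 1)]
    rw [h2] at h1
    have h3 : Tendsto (fun n => f (n + 2) y) atTop (nhds (ρ y)) := by
      have := (hρ y).comp (tendsto_add_atTop_nat 1)
      simpa [Function.comp_def, add_assoc] using this
    exact tendsto_nhds_unique h1 h3
  -- conclusion
  refine ⟨ρ, hρmeas, hρbd, hρ1, fun A hA => ?_⟩
  have hip : Integrable (Function.uncurry fun x y => ρ x * k x y) (m.prod (m.restrict A)) := by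
    refine bdd_int _ (Lam * Lam) ((hρmeas.comp measurable_fst).mul hk).aestronglyMeasurable
      fun p => ?_
    rw [Function.uncurry, abs_mul]
    exact mul_le_mul (habsρ p.1) (habsk p.1 p.2) (abs_nonneg _) hΛ0.le
  have hswap := integral_integral_swap (f := fun x y => ρ x * k x y)
    (μ := m) (ν := m.restrict A) hip
  calc ∫ x, ρ x * ∫ y in A, k x y ∂m ∂m
      = ∫ x, ∫ y in A, ρ x * k x y ∂m ∂m := by
        refine integral_congr_ae (Filter.Eventually.of_forall fun x => ?_)
        show ρ x * ∫ y in A, k x y ∂m = ∫ y in A, ρ x * k x y ∂m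
        rw [integral_const_mul]
    _ = ∫ y in A, ∫ x, ρ x * k x y ∂m ∂m := hswap
    _ = ∫ y in A, ρ y ∂m := by
        refine integral_congr_ae (Filter.Eventually.of_forall fun y => ?_)
        exact hfix y
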